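/- For real sequences (a_n) satisfying a_{n+3} = ((n+1)(n+2)C₀ a_{n+2} + a_n + Σ_{i=0}^{n} a_i a_{n-i}) / ((n+1)(n+2)(n+3)) with |C₀| < 1 and |a₀|, |a₁|, |a₂| < 1, one has the inductive bound: if |a_{k+2}| < 2/k² for all 1 ≤ k ≤ n (with n ≥ 3), then |a_{n+3}| ≤ (n+6)/((n+1)(n+2)(n+3)) < 2/(n+1)². -/
import Mathlib

set_option maxHeartbeats 1000000


/-- inductive bound for the coefficients of the power series solution of
`Ψ''' = C₀Ψ'' + Ψ² + Ψ`. -/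
theorem stmt1 (C₀ : ℝ) (hC : |C₀| < 1) (a : ℕ → ℝ)
    (ha0 : |a 0| < 1) (ha1 : |a 1| < 1) (ha2 : |a 2| < 1)
    (hrec : ∀ n : ℕ, a (n + 3) =
      (((n : ℝ) + 1) * ((n : ℝ) + 2) * C₀ * a (n + 2) + a n
        + ∑ i ∈ Finset.range (n + 1), a i * a (n - i))
      / (((n : ℝ) + 1) * ((n : ℝ) + 2) * ((n : ℝ) + 3)))
    (n : ℕ) (hn : 3 ≤ n)
    (hind : ∀ k : ℕ, 1 ≤ k → k ≤ n → |a (k + 2)| < 2 / (k : ℝ) ^ 2) :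
    |a (n + 3)| ≤ ((n : ℝ) + 6) / (((n : ℝ) + 1) * ((n : ℝ) + 2) * ((n : ℝ) + 3)) ∧
    ((n : ℝ) + 6) / (((n : ℝ) + 1) * ((n : ℝ) + 2) * ((n : ℝ) + 3)) < 2 / ((n : ℝ) + 1) ^ 2 := by
  have hn0 : (0:ℝ) ≤ (n:ℝ) := Nat.cast_nonneg n
  have hD : (0:ℝ) < ((n : ℝ) + 1) * ((n : ℝ) + 2) * ((n : ℝ) + 3) := by positivity
  refine ⟨?_, ?_⟩
  · -- bound on |a 3|
    have ha3 : |a 3| ≤ 2/3 := by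
      have h := hrec 0
      norm_num [Finset.sum_range_one] at h
      rw [h]
      have e : |(2 * C₀ * a 2 + a 0 + a 0 * a 0) / 6| =
          |2 * C₀ * a 2 + a 0 + a 0 * a 0| / 6 := by
        rw [abs_div]; norm_num
      rw [e]
      have h1 : |2 * C₀ * a 2 + a 0 + a 0 * a 0| ≤ 4 := by
        calc |2 * C₀ * a 2 + a 0 + a 0 * a 0|
            ≤ |2 * C₀ * a 2| + |a 0| + |a 0 * a 0| := abs_add_three _ _ _
          _ ≤ 4 := by
              rw [abs_mul, abs_mul, abs_mul]
              norm_num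
              have := abs_nonneg C₀; have := abs_nonneg (a 0); have := abs_nonneg (a 2)
              nlinarith [abs_mul_abs_self (a 0)]
      linarith
    rcases (by omega : n = 3 ∨ 4 ≤ n) with rfl | hn4
    · -- n = 3 case
      have ha5 : |a 5| < 2/9 := by
        have := hind 3 (by norm_num) le_rfl
        norm_num at this
        exact this
      have h := hrec 3
      norm_num [Finset.sum_range_succ] at h ⊢
      rw [h]
      have e : |(20 * C₀ * a 5 + a 3 + (a 0 * a 3 + a 1 * a 2 + a 2 * a 1 + a 3 * a 0)) / 120| =
          |20 * C₀ * a 5 + a 3 + (a 0 * a 3 + a 1 * a 2 + a 2 * a 1 + a 3 * a 0)| / 120 := by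
        rw [abs_div]; norm_num
      have c1 : |a 0 * a 3| ≤ 2/3 := by
        rw [abs_mul]
        have := abs_nonneg (a 0); have := abs_nonneg (a 3)
        nlinarith
      have c2 : |a 1 * a 2| ≤ 1 := by
        rw [abs_mul]
        have := abs_nonneg (a 1); have := abs_nonneg (a 2)
        nlinarith
      have c3 : |a 2 * a 1| ≤ 1 := by
        rw [abs_mul]
        have := abs_nonneg (a 1); have := abs_nonneg (a 2)
        nlinarith
      have c4 : |a 3 * a 0| ≤ 2/3 := by
        rw [abs_mul]
        have := abs_nonneg (a 0); have := abs_nonneg (a 3)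
        nlinarith
      have t1 : |20 * C₀ * a 5| ≤ 40/9 := by
        rw [abs_mul, abs_mul]
        norm_num
        have := abs_nonneg C₀; have := abs_nonneg (a 5)
        nlinarith
      have hsum : |a 0 * a 3 + a 1 * a 2 + a 2 * a 1 + a 3 * a 0| ≤ 10/3 := by
        calc |a 0 * a 3 + a 1 * a 2 + a 2 * a 1 + a 3 * a 0|
            ≤ |a 0 * a 3 + a 1 * a 2 + a 2 * a 1| + |a 3 * a 0| := abs_add_le _ _
          _ ≤ |a 0 * a 3| + |a 1 * a 2| + |a 2 * a 1| + |a 3 * a 0| := by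
              linarith [abs_add_three (a 0 * a 3) (a 1 * a 2) (a 2 * a 1)]
          _ ≤ 10/3 := by linarith
      have hnum : |20 * C₀ * a 5 + a 3 + (a 0 * a 3 + a 1 * a 2 + a 2 * a 1 + a 3 * a 0)| ≤ 9 := by
        calc _ ≤ |20 * C₀ * a 5| + |a 3| + |a 0 * a 3 + a 1 * a 2 + a 2 * a 1 + a 3 * a 0| :=
              abs_add_three _ _ _
          _ ≤ 9 := by linarith [t1, ha3, hsum]
      rw [e]
      linarith
    · -- n ≥ 4 case
      have hn4' : (4:ℝ) ≤ (n:ℝ) := by exact_mod_cast hn4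
      have hbound : ∀ m : ℕ, m ≤ n + 2 → |a m| ≤ 1 := by
        intro m hm
        match m with
        | 0 => exact le_of_lt ha0
        | 1 => exact le_of_lt ha1
        | 2 => exact le_of_lt ha2
        | 3 => linarith
        | (k + 4) =>
          have hk : k + 2 ≤ n := by omega
          have h := hind (k + 2) (by omega) hk
          have hcast : ((k + 2 : ℕ) : ℝ) = (k:ℝ) + 2 := by push_cast; ring
          rw [hcast] at h
          have heq : (k + 2) + 2 = k + 4 := by omega
          rw [heq] at h
          have hk0 : (0:ℝ) ≤ (k:ℝ) := Nat.cast_nonneg k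
          have hc : (4:ℝ) ≤ ((k:ℝ) + 2) ^ 2 := by nlinarith
          have h2 : 2 / ((k:ℝ) + 2) ^ 2 ≤ 1 := by
            rw [div_le_one (by positivity)]
            linarith
          linarith
      have han2 : |a (n + 2)| < 2 / (n:ℝ)^2 := hind n (by omega) le_rfl
      have hnpos : (0:ℝ) < (n:ℝ) := by linarith
      have t1 : |((n : ℝ) + 1) * ((n : ℝ) + 2) * C₀ * a (n + 2)| ≤ 4 := by
        have hC0 := abs_nonneg C₀
        have ha' := abs_nonneg (a (n + 2))
        calc |((n : ℝ) + 1) * ((n : ℝ) + 2) * C₀ * a (n + 2)|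
            = ((n:ℝ)+1) * ((n:ℝ)+2) * |C₀| * |a (n + 2)| := by
              rw [abs_mul, abs_mul, abs_mul,
                abs_of_nonneg (by linarith : (0:ℝ) ≤ (n:ℝ)+1),
                abs_of_nonneg (by linarith : (0:ℝ) ≤ (n:ℝ)+2)]
          _ ≤ ((n:ℝ)+1) * ((n:ℝ)+2) * 1 * |a (n + 2)| := by
              gcongr
          _ ≤ ((n:ℝ)+1) * ((n:ℝ)+2) * 1 * (2 / (n:ℝ)^2) := by
              gcongr
          _ = (((n:ℝ)+1) * ((n:ℝ)+2) * 2) / (n:ℝ)^2 := by ring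
          _ ≤ 4 := by
              rw [div_le_iff₀ (by positivity)]
              nlinarith
      have t2 : |a n| ≤ 1 := hbound n (by omega)
      have t3 : |∑ i ∈ Finset.range (n + 1), a i * a (n - i)| ≤ (n:ℝ) + 1 := by
        calc |∑ i ∈ Finset.range (n + 1), a i * a (n - i)|
            ≤ ∑ i ∈ Finset.range (n + 1), |a i * a (n - i)| :=
              Finset.abs_sum_le_sum_abs _ _
          _ ≤ ∑ _i ∈ Finset.range (n + 1), (1:ℝ) := by
              refine Finset.sum_le_sum fun i hi => ?_
              have hi' := Finset.mem_range.mp hi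
              rw [abs_mul]
              have b1 : |a i| ≤ 1 := hbound i (by omega)
              have b2 : |a (n - i)| ≤ 1 := hbound (n - i) (by omega)
              nlinarith [abs_nonneg (a i), abs_nonneg (a (n - i))]
          _ = (n:ℝ) + 1 := by
              rw [Finset.sum_const, Finset.card_range]
              push_cast
              ring
      rw [hrec n, abs_div, abs_of_pos hD]
      have hnum : |((n : ℝ) + 1) * ((n : ℝ) + 2) * C₀ * a (n + 2) + a n
          + ∑ i ∈ Finset.range (n + 1), a i * a (n - i)| ≤ (n:ℝ) + 6 := by
        calc _ ≤ |((n : ℝ) + 1) * ((n : ℝ) + 2) * C₀ * a (n + 2)| + |a n|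
              + |∑ i ∈ Finset.range (n + 1), a i * a (n - i)| := abs_add_three _ _ _
          _ ≤ (n:ℝ) + 6 := by linarith
      gcongr
  · rw [div_lt_div_iff₀ hD (by positivity)]
    nlinarith
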